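/- For a standard Gaussian random vector u ~ N(0, I_d) and any real γ ≥ 2, E[||u||^γ] ≤ (d+γ)^{γ/2}. -/

import Mathlib

open MeasureTheory ProbabilityTheory Real
open scoped NNReal ENNReal

/-- The standard Gaussian measure on `ℝ^d` (Euclidean), with i.i.d. `N(0,1)` coordinates. -/
noncomputable def stdGaussianE (d : ℕ) : Measure (EuclideanSpace ℝ (Fin d)) :=
  (Measure.pi fun _ => gaussianReal 0 1).map (MeasurableEquiv.toLp 2 (Fin d → ℝ))

-- 1D: ∫ exp(t x²) d gaussian = √((1-2t)⁻¹)
lemma gauss_exp_sq_int {t : ℝ} (ht : t < 1/2) :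
    ∫ x, Real.exp (t * x ^ 2) ∂(gaussianReal 0 1) = Real.sqrt ((1 - 2*t)⁻¹) := by
  have hv : ((1 : ℝ≥0) : ℝ) = 1 := rfl
  rw [gaussianReal_of_var_ne_zero 0 one_ne_zero, gaussianPDF_def]
  have hmeas : Measurable fun x => (gaussianPDFReal 0 1 x).toNNReal :=
    (measurable_gaussianPDFReal 0 1).real_toNNReal
  have hd : (fun x => ENNReal.ofReal (gaussianPDFReal 0 1 x))
      = fun x => ((gaussianPDFReal 0 1 x).toNNReal : ℝ≥0∞) := rfl
  rw [hd, integral_withDensity_eq_integral_smul hmeas]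
  have hb : (0:ℝ) < 1/2 - t := by linarith
  have : ∀ x : ℝ, (gaussianPDFReal 0 1 x).toNNReal • Real.exp (t * x ^ 2)
      = (Real.sqrt (2 * π))⁻¹ * Real.exp (-(1/2 - t) * x ^ 2) := by
    intro x
    rw [NNReal.smul_def, smul_eq_mul, Real.coe_toNNReal _ (gaussianPDFReal_nonneg 0 1 x)]
    simp only [gaussianPDFReal, NNReal.coe_one, mul_one, sub_zero]
    rw [mul_assoc, ← Real.exp_add]
    ring_nf
  rw [integral_congr_ae (Filter.Eventually.of_forall this)]
  rw [integral_const_mul, integral_gaussian]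
  rw [← Real.sqrt_inv, ← Real.sqrt_mul (by positivity)]
  congr 1
  have hπ : π ≠ 0 := pi_ne_zero
  have h2 : (1 - 2*t) ≠ 0 := by linarith
  field_simp

lemma gauss_exp_sq_integrable {t : ℝ} (ht : t < 1/2) :
    Integrable (fun x => Real.exp (t * x ^ 2)) (gaussianReal 0 1) := by
  rw [gaussianReal_of_var_ne_zero 0 one_ne_zero, gaussianPDF_def]
  have hmeas : Measurable fun x => (gaussianPDFReal 0 1 x).toNNReal :=
    (measurable_gaussianPDFReal 0 1).real_toNNReal
  have hd : (fun x => ENNReal.ofReal (gaussianPDFReal 0 1 x))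
      = fun x => ((gaussianPDFReal 0 1 x).toNNReal : ℝ≥0∞) := rfl
  rw [hd, integrable_withDensity_iff_integrable_smul hmeas]
  have hb : (0:ℝ) < 1/2 - t := by linarith
  apply (((integrable_exp_neg_mul_sq hb).const_mul ((Real.sqrt (2 * π))⁻¹)).congr)
  filter_upwards with x
  rw [NNReal.smul_def, smul_eq_mul, Real.coe_toNNReal _ (gaussianPDFReal_nonneg 0 1 x)]
  simp only [gaussianPDFReal, NNReal.coe_one, mul_one, sub_zero]
  rw [mul_assoc, ← Real.exp_add]
  ring_nf

def G : Type := ℝ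
instance : MeasurableSpace G := inferInstanceAs (MeasurableSpace ℝ)
noncomputable instance : MeasureSpace G := ⟨gaussianReal 0 1⟩
instance : SigmaFinite (volume : Measure G) := inferInstanceAs (SigmaFinite (gaussianReal 0 1))

lemma norm_sq_eq (d : ℕ) (u : EuclideanSpace ℝ (Fin d)) : ‖u‖ ^ 2 = ∑ i, (u i) ^ 2 := by
  rw [EuclideanSpace.norm_eq, Real.sq_sqrt (by positivity)]
  simp [Real.norm_eq_abs, sq_abs]

lemma pi_exp_eq_prod (d : ℕ) (t : ℝ) (u : EuclideanSpace ℝ (Fin d)) :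
    Real.exp (t * ‖u‖ ^ 2) = ∏ i, Real.exp (t * (u i) ^ 2) := by
  rw [norm_sq_eq, Finset.mul_sum, Real.exp_sum]

lemma pi_exp_int (d : ℕ) {t : ℝ} (ht : t < 1/2) :
    ∫ u, Real.exp (t * ‖u‖ ^ 2) ∂(stdGaussianE d)
      = ((1 - 2*t)⁻¹) ^ ((d:ℝ)/2) := by
  simp_rw [pi_exp_eq_prod]
  have h := MeasureTheory.integral_fintype_prod_eq_pow (𝕜 := ℝ) (ι := Fin d)
    (fun x : ℝ => Real.exp (t * x ^ 2)) (μ := gaussianReal 0 1)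
  have h2 : ∫ u, ∏ i, Real.exp (t * (u i) ^ 2) ∂(stdGaussianE d)
      = (∫ x, Real.exp (t * x ^ 2) ∂(gaussianReal 0 1)) ^ d := by
    simpa [stdGaussianE, integral_map_equiv, Fintype.card_fin] using h
  rw [h2, gauss_exp_sq_int ht]
  have hc : (0:ℝ) ≤ (1 - 2*t)⁻¹ := by
    have : (0:ℝ) < 1 - 2*t := by linarith
    positivity
  rw [Real.sqrt_eq_rpow, ← Real.rpow_natCast (((1 - 2*t)⁻¹) ^ ((1:ℝ)/2)) d,
    ← Real.rpow_mul hc]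
  ring_nf

lemma pi_exp_integrable (d : ℕ) {t : ℝ} (ht : t < 1/2) :
    Integrable (fun u => Real.exp (t * ‖u‖ ^ 2)) (stdGaussianE d) := by
  have h : Integrable (fun x : Fin d → G => ∏ i, Real.exp (t * (show ℝ from x i) ^ 2)) :=
    Integrable.fintype_prod (f := fun _ : Fin d => fun x : G => Real.exp (t * (show ℝ from x) ^ 2))
      (fun _ => gauss_exp_sq_integrable ht)
  have h2 : Integrable (fun u : EuclideanSpace ℝ (Fin d) => ∏ i, Real.exp (t * (u i) ^ 2))
      (stdGaussianE d) := by
    rw [stdGaussianE, integrable_map_equiv]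
    exact h
  apply h2.congr
  filter_upwards with u
  rw [pi_exp_eq_prod]

lemma rpow_le_mul_exp {a p t : ℝ} (ha : 0 ≤ a) (hp : 0 < p) (htp : 0 < t) :
    a ^ p ≤ (p/t) ^ p * Real.exp (-p) * Real.exp (t*a) := by
  rcases eq_or_lt_of_le ha with h|h
  · rw [← h, Real.zero_rpow hp.ne']
    positivity
  · have hta : 0 < t*a/p := by positivity
    have hpt : 0 < p/t := div_pos hp htp
    have hlog : Real.log a ≤ t*a/p - 1 + Real.log (p/t) := by
      have h1 := Real.log_le_sub_one_of_pos hta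
      have h2 : Real.log a = Real.log (t*a/p) + Real.log (p/t) := by
        rw [← Real.log_mul hta.ne' hpt.ne']
        congr 1
        field_simp
      linarith
    calc a ^ p = Real.exp (Real.log a * p) := Real.rpow_def_of_pos h p
      _ ≤ Real.exp ((t*a/p - 1 + Real.log (p/t)) * p) := by
          exact Real.exp_le_exp.mpr (mul_le_mul_of_nonneg_right hlog hp.le)
      _ = (p/t) ^ p * Real.exp (-p) * Real.exp (t*a) := by
          rw [Real.rpow_def_of_pos hpt, ← Real.exp_add, ← Real.exp_add]
          congr 1
          field_simp
          ring

/-- For `u ~ N(0, I_d)` and any real `γ ≥ 2`, `E[‖u‖^γ] ≤ (d+γ)^{γ/2}`. -/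
theorem gaussian_norm_moment_bound (d : ℕ) (γ : ℝ) (hγ : 2 ≤ γ) :
    ∫ u, ‖u‖ ^ γ ∂(stdGaussianE d) ≤ ((d : ℝ) + γ) ^ (γ / 2) := by
  rcases Nat.eq_zero_or_pos d with hd0 | hdpos
  · subst hd0
    have h0 : ∀ u : EuclideanSpace ℝ (Fin 0), ‖u‖ ^ γ = (0:ℝ) := by
      intro u
      rw [Subsingleton.elim u 0, norm_zero, Real.zero_rpow (by linarith)]
    rw [integral_congr_ae (Filter.Eventually.of_forall h0), integral_zero]
    exact Real.rpow_nonneg (by push_cast; linarith) _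
  · have hD1 : (1:ℝ) ≤ (d:ℝ) := by exact_mod_cast hdpos
    have hγ0 : (0:ℝ) < γ := by linarith
    have hDγ : (0:ℝ) < (d:ℝ) + γ := by linarith
    have hp : (0:ℝ) < γ/2 := by linarith
    set t : ℝ := (γ/2)/((d:ℝ)+γ) with ht'
    have htpos : 0 < t := div_pos hp hDγ
    have ht : t < 1/2 := by
      rw [ht', div_lt_iff₀ hDγ]
      linarith
    have hpt : (γ/2) / t = (d:ℝ) + γ := by
      rw [ht']
      field_simp
    have key : ∀ u : EuclideanSpace ℝ (Fin d),
        ‖u‖ ^ γ ≤ ((d:ℝ)+γ) ^ (γ/2) * Real.exp (-(γ/2)) * Real.exp (t * ‖u‖^2) := by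
      intro u
      have h1 : ‖u‖ ^ γ = (‖u‖^2 : ℝ) ^ (γ/2) := by
        rw [← Real.rpow_natCast ‖u‖ 2, ← Real.rpow_mul (norm_nonneg u)]
        norm_num
        ring_nf
      rw [h1, ← hpt]
      exact rpow_le_mul_exp (by positivity) hp htpos
    have hInt := pi_exp_integrable d ht
    have step1 : ∫ u, ‖u‖ ^ γ ∂(stdGaussianE d)
        ≤ ∫ u, ((d:ℝ)+γ) ^ (γ/2) * Real.exp (-(γ/2)) * Real.exp (t * ‖u‖^2)
          ∂(stdGaussianE d) := by
      apply integral_mono_of_nonneg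
      · filter_upwards with u
        exact Real.rpow_nonneg (norm_nonneg u) γ
      · exact hInt.const_mul _
      · filter_upwards with u
        exact key u
    rw [integral_const_mul, pi_exp_int d ht] at step1
    refine step1.trans ?_
    have hDpos : (0:ℝ) < (d:ℝ) := by linarith
    have h1t : 1 - 2*t = (d:ℝ)/((d:ℝ)+γ) := by
      rw [ht']
      field_simp
      ring
    have hinv : (1 - 2*t)⁻¹ = ((d:ℝ)+γ)/(d:ℝ) := by rw [h1t, inv_div]
    have hfrac : (0:ℝ) < ((d:ℝ)+γ)/(d:ℝ) := by positivity
    have hlog : (((d:ℝ)+γ)/(d:ℝ)) ^ ((d:ℝ)/2) ≤ Real.exp (γ/2) := by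
      rw [Real.rpow_def_of_pos hfrac]
      apply Real.exp_le_exp.mpr
      have hle := Real.log_le_sub_one_of_pos hfrac
      have heq : ((d:ℝ)+γ)/(d:ℝ) - 1 = γ/(d:ℝ) := by field_simp; ring
      have h2 : Real.log (((d:ℝ)+γ)/(d:ℝ)) ≤ γ/(d:ℝ) := by rw [← heq]; exact hle
      calc Real.log (((d:ℝ)+γ)/(d:ℝ)) * ((d:ℝ)/2)
          ≤ (γ/(d:ℝ)) * ((d:ℝ)/2) := mul_le_mul_of_nonneg_right h2 (by positivity)
        _ = γ/2 := by field_simp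
    calc ((d:ℝ)+γ) ^ (γ/2) * Real.exp (-(γ/2)) * ((1 - 2*t)⁻¹) ^ ((d:ℝ)/2)
        ≤ ((d:ℝ)+γ) ^ (γ/2) * Real.exp (-(γ/2)) * Real.exp (γ/2) := by
          rw [hinv]
          exact mul_le_mul_of_nonneg_left hlog (by positivity)
      _ = ((d:ℝ)+γ) ^ (γ/2) := by
          rw [mul_assoc, ← Real.exp_add]
          simp
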